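/- The late-disclosure threshold v^L(s) is increasing in q when s > v^B and decreasing in q when s < v^B. Specifically, writing v^L(s) = λ(q)·s + (1-λ(q))·E[v | N, ∅] as a convex combination with λ(q) = Pr(V | s, ∅) increasing in q: if s > E[v|N,∅] then v^L(s) increases in q; if s < E[v|N,∅] it decreases; and s ≷ v^B implies s ≷ E[v|N,∅]. -/

import Mathlib

open intervalIntegral
open Set

section Aux

variable {vmin vmax : ℝ} {g : ℝ → ℝ}

lemma intg_sub (hg_cont : ContinuousOn g (Set.Icc vmin vmax))
    {x y : ℝ} (hx : vmin ≤ x) (hxy : x ≤ y) (hy : y ≤ vmax) :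
    IntervalIntegrable g MeasureTheory.volume x y := by
  apply ContinuousOn.intervalIntegrable
  apply hg_cont.mono
  rw [Set.uIcc_of_le hxy]
  exact Set.Icc_subset_Icc hx hy

lemma ftc_prim {f : ℝ → ℝ} (hf_cont : ContinuousOn f (Set.Icc vmin vmax))
    {x : ℝ} (hx : x ∈ Set.Ioo vmin vmax) :
    HasDerivAt (fun u => ∫ t in vmin..u, f t) (f x) x := by
  apply intervalIntegral.integral_hasDerivAt_right
    (intg_sub hf_cont le_rfl hx.1.le hx.2.le)
  · exact ContinuousOn.stronglyMeasurableAtFilter isOpen_Ioo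
      (hf_cont.mono Set.Ioo_subset_Icc_self) x hx
  · exact (hf_cont x ⟨hx.1.le, hx.2.le⟩).continuousAt (Icc_mem_nhds hx.1 hx.2)

lemma lc_ptwise (vmin vmax : ℝ) (g : ℝ → ℝ)
    (hg_pos : ∀ x ∈ Set.Icc vmin vmax, 0 < g x)
    (hlc : ∀ x ∈ Set.Icc vmin vmax, ∀ y ∈ Set.Icc vmin vmax,
      ∀ a b : ℝ, 0 ≤ a → 0 ≤ b → a + b = 1 →
        g x ^ a * g y ^ b ≤ g (a * x + b * y))
    (t v : ℝ) (h0 : vmin ≤ t) (h1 : t < v) (h2 : v ≤ vmax) :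
    ∀ u ∈ Set.Icc vmin t, g v * g u ≤ g t * g (u + (v - t)) := by
    intro u hu
    have hu1 : vmin ≤ u := hu.1
    have hu2 : u ≤ t := hu.2
    have huv : u < v := lt_of_le_of_lt hu2 h1
    have hvu : (0:ℝ) < v - u := by linarith
    have ha0 : 0 ≤ (v - t)/(v - u) := div_nonneg (by linarith) hvu.le
    have hb0 : 0 ≤ (t - u)/(v - u) := div_nonneg (by linarith) hvu.le
    have hab : (v - t)/(v - u) + (t - u)/(v - u) = 1 := by
      rw [← add_div]; field_simp; ring
    have hba : (t - u)/(v - u) + (v - t)/(v - u) = 1 := by linarith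
    have huI : u ∈ Set.Icc vmin vmax := ⟨hu1, by linarith⟩
    have hvI : v ∈ Set.Icc vmin vmax := ⟨by linarith, h2⟩
    have e1 : (v - t)/(v - u) * u + (t - u)/(v - u) * v = t := by
      field_simp; ring
    have e2 : (t - u)/(v - u) * u + (v - t)/(v - u) * v = u + (v - t) := by
      field_simp; ring
    have i1 := hlc u huI v hvI _ _ ha0 hb0 hab
    have i2 := hlc u huI v hvI _ _ hb0 ha0 hba
    rw [e1] at i1
    rw [e2] at i2
    have hgu : 0 < g u := hg_pos u huI
    have hgv : 0 < g v := hg_pos v hvI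
    have prod : (g u ^ ((v - t)/(v - u)) * g v ^ ((t - u)/(v - u)))
        * (g u ^ ((t - u)/(v - u)) * g v ^ ((v - t)/(v - u))) = g u * g v := by
      rw [show (g u ^ ((v - t)/(v - u)) * g v ^ ((t - u)/(v - u)))
        * (g u ^ ((t - u)/(v - u)) * g v ^ ((v - t)/(v - u)))
           = (g u ^ ((v - t)/(v - u)) * g u ^ ((t - u)/(v - u)))
            * (g v ^ ((t - u)/(v - u)) * g v ^ ((v - t)/(v - u))) by ring,
          ← Real.rpow_add hgu, ← Real.rpow_add hgv, hab, hba, Real.rpow_one, Real.rpow_one]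
    have p2 : 0 ≤ g u ^ ((t - u)/(v - u)) * g v ^ ((v - t)/(v - u)) :=
      mul_nonneg (Real.rpow_nonneg hgu.le _) (Real.rpow_nonneg hgv.le _)
    calc g v * g u = (g u ^ ((v - t)/(v - u)) * g v ^ ((t - u)/(v - u)))
        * (g u ^ ((t - u)/(v - u)) * g v ^ ((v - t)/(v - u))) := by rw [prod]; ring
    _ ≤ g t * g (u + (v - t)) := mul_le_mul i1 i2 p2 (hg_pos t ⟨h0, by linarith⟩).le

lemma lc_ratio (vmin vmax : ℝ) (g : ℝ → ℝ)
    (hg_cont : ContinuousOn g (Set.Icc vmin vmax))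
    (hg_pos : ∀ x ∈ Set.Icc vmin vmax, 0 < g x)
    (hlc : ∀ x ∈ Set.Icc vmin vmax, ∀ y ∈ Set.Icc vmin vmax,
      ∀ a b : ℝ, 0 ≤ a → 0 ≤ b → a + b = 1 →
        g x ^ a * g y ^ b ≤ g (a * x + b * y))
    (t v : ℝ) (h0 : vmin ≤ t) (h1 : t ≤ v) (h2 : v ≤ vmax) :
    g v * ∫ u in vmin..t, g u ≤ g t * ∫ u in vmin..v, g u := by
  rcases eq_or_lt_of_le h1 with rfl | htv
  · rfl
  have c2 : ContinuousOn (fun u => g t * g (u + (v - t))) (Set.Icc vmin t) := by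
    apply ContinuousOn.mul continuousOn_const
    apply hg_cont.comp (by fun_prop)
    intro u hu
    exact ⟨by simp [Set.mem_Icc] at hu ⊢; linarith [hu.1], by simp [Set.mem_Icc] at hu ⊢; linarith [hu.2]⟩
  have step1 : ∫ u in vmin..t, g v * g u ≤ ∫ u in vmin..t, g t * g (u + (v - t)) := by
    apply intervalIntegral.integral_mono_on h0
    · exact (intg_sub hg_cont le_rfl h0 (by linarith)).const_mul _
    · exact (c2.mono (by rw [Set.uIcc_of_le h0])).intervalIntegrable
    · exact lc_ptwise vmin vmax g hg_pos hlc t v h0 htv h2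
  have step2 : (∫ u in vmin..t, g (u + (v - t))) = ∫ u in vmin + (v - t)..v, g u := by
    rw [intervalIntegral.integral_comp_add_right]
    norm_num
  have step3 : (∫ u in vmin + (v - t)..v, g u) ≤ ∫ u in vmin..v, g u := by
    have hadd : (∫ u in vmin..vmin + (v-t), g u) + (∫ u in vmin + (v - t)..v, g u)
        = ∫ u in vmin..v, g u :=
      intervalIntegral.integral_add_adjacent_intervals
        (intg_sub hg_cont le_rfl (by linarith) (by linarith))
        (intg_sub hg_cont (by linarith) (by linarith) h2)
    have hnn : 0 ≤ ∫ u in vmin..vmin + (v-t), g u := by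
      apply intervalIntegral.integral_nonneg (by linarith)
      intro u hu
      exact (hg_pos u ⟨hu.1, by linarith [hu.2]⟩).le
    linarith
  have gt0 : 0 < g t := hg_pos t ⟨h0, by linarith⟩
  calc g v * ∫ u in vmin..t, g u = ∫ u in vmin..t, g v * g u := by
        rw [intervalIntegral.integral_const_mul]
  _ ≤ ∫ u in vmin..t, g t * g (u + (v - t)) := step1
  _ = g t * ∫ u in vmin + (v - t)..v, g u := by
        rw [intervalIntegral.integral_const_mul, step2]
  _ ≤ g t * ∫ u in vmin..v, g u := by nlinarith [step3]

lemma parts_id (hg_cont : ContinuousOn g (Set.Icc vmin vmax))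
    {v : ℝ} (hv0 : vmin ≤ v) (hv1 : v ≤ vmax) :
    ∫ t in vmin..v, (∫ u in vmin..t, g u)
      = v * (∫ t in vmin..v, g t) - ∫ t in vmin..v, t * g t := by
  have hG_cont : ContinuousOn (fun u => ∫ t in vmin..u, g t) (Set.Icc vmin vmax) := by
    have := intervalIntegral.continuousOn_primitive_interval
      (f := g) (μ := MeasureTheory.volume) (a := vmin) (b := vmax)
      (by rw [Set.uIcc_of_le (le_trans hv0 hv1)]; exact hg_cont.integrableOn_Icc)
    rwa [Set.uIcc_of_le (le_trans hv0 hv1)] at this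
  have htg_cont : ContinuousOn (fun t => t * g t) (Set.Icc vmin vmax) :=
    (continuousOn_id.mul hg_cont)
  have intG : IntervalIntegrable (fun u => ∫ t in vmin..u, g t) MeasureTheory.volume vmin v := by
    apply ContinuousOn.intervalIntegrable
    exact hG_cont.mono (by rw [Set.uIcc_of_le hv0]; exact Set.Icc_subset_Icc le_rfl hv1)
  have inttg : IntervalIntegrable (fun t => t * g t) MeasureTheory.volume vmin v := by
    apply ContinuousOn.intervalIntegrable
    exact htg_cont.mono (by rw [Set.uIcc_of_le hv0]; exact Set.Icc_subset_Icc le_rfl hv1)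
  have main : ∫ t in vmin..v, ((∫ u in vmin..t, g u) + t * g t)
      = v * (∫ t in vmin..v, g t) - vmin * (∫ t in vmin..vmin, g t) := by
    apply intervalIntegral.integral_eq_sub_of_hasDeriv_right_of_le hv0
    · exact (continuousOn_id.mul (hG_cont.mono (Set.Icc_subset_Icc le_rfl hv1)))
    · intro x hx
      have hd : HasDerivAt (fun u => u * ∫ t in vmin..u, g t)
          ((∫ u in vmin..x, g u) + x * g x) x := by
        have := (hasDerivAt_id x).fun_mul (ftc_prim hg_cont ⟨hx.1, lt_of_lt_of_le hx.2 hv1⟩)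
        simpa [one_mul] using this
      exact hd.hasDerivWithinAt
    · exact intG.add inttg
  rw [intervalIntegral.integral_add intG inttg] at main
  simp only [intervalIntegral.integral_same, mul_zero] at main
  linarith

lemma key_lc (hg_cont : ContinuousOn g (Set.Icc vmin vmax))
    (hg_pos : ∀ x ∈ Set.Icc vmin vmax, 0 < g x)
    (hlc : ∀ x ∈ Set.Icc vmin vmax, ∀ y ∈ Set.Icc vmin vmax,
      ∀ a b : ℝ, 0 ≤ a → 0 ≤ b → a + b = 1 →
        g x ^ a * g y ^ b ≤ g (a * x + b * y))
    {v : ℝ} (hv0 : vmin ≤ v) (hv1 : v ≤ vmax) :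
    g v * (v * (∫ t in vmin..v, g t) - ∫ t in vmin..v, t * g t)
      ≤ (∫ t in vmin..v, g t) ^ 2 := by
  rw [← parts_id hg_cont hv0 hv1]
  have hG_cont : ContinuousOn (fun u => ∫ t in vmin..u, g t) (Set.Icc vmin vmax) := by
    have := intervalIntegral.continuousOn_primitive_interval
      (f := g) (μ := MeasureTheory.volume) (a := vmin) (b := vmax)
      (by rw [Set.uIcc_of_le (le_trans hv0 hv1)]; exact hg_cont.integrableOn_Icc)
    rwa [Set.uIcc_of_le (le_trans hv0 hv1)] at this
  have step : ∫ t in vmin..v, g v * (∫ u in vmin..t, g u)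
      ≤ ∫ t in vmin..v, g t * (∫ u in vmin..v, g u) := by
    apply intervalIntegral.integral_mono_on hv0
    · apply IntervalIntegrable.const_mul
      apply ContinuousOn.intervalIntegrable
      exact hG_cont.mono (by rw [Set.uIcc_of_le hv0]; exact Set.Icc_subset_Icc le_rfl hv1)
    · exact (intg_sub hg_cont le_rfl hv0 hv1).mul_const _
    · intro t ht
      exact lc_ratio vmin vmax g hg_cont hg_pos hlc t v ht.1 ht.2 hv1
  rw [intervalIntegral.integral_const_mul] at step
  rw [intervalIntegral.integral_mul_const] at step
  calc g v * ∫ t in vmin..v, (∫ u in vmin..t, g u)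
      ≤ (∫ t in vmin..v, g t) * (∫ u in vmin..v, g u) := step
  _ = (∫ t in vmin..v, g t) ^ 2 := by ring

lemma master_eq (p q s v μ Dv Nm a : ℝ) (hD : 0 < Dv) (hq : 0 < q) (hq1 : q < 1) (ha : 0 < a)
    (lamv Ev : ℝ)
    (hlamv : lamv = q * a / (q * a + (1 - q) * Dv))
    (hEv : Ev = Nm / Dv)
    (h : v = lamv * s + (1 - lamv) * Ev) :
    (1 - q) * (v * Dv - Nm) = q * a * (s - v) := by
  have hT : 0 < q * a + (1 - q) * Dv := by nlinarith
  rw [hlamv, hEv] at h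
  field_simp at h
  have h2 : ((q * a + (1 - q) * Dv) * Dv) * (v * (q * a + (1 - q) * Dv))
      = ((q * a + (1 - q) * Dv) * Dv) * (q * a * s + (1 - q) * Nm) := by linear_combination (q * a + (1 - q) * Dv) * h
  have h3 := mul_left_cancel₀ (ne_of_gt (mul_pos hT hD)) h2
  linear_combination h3

lemma cross_contra (q1 q2 a x1 x2 y1 y2 : ℝ) (hq10 : 0 < q1) (hq21 : q2 < 1) (h12 : q1 < q2)
    (ha : 0 < a) (hx2 : 0 < x2) (hy1 : 0 < y1) (hy2 : 0 < y2)
    (hx : x2 ≤ x1) (hy : y1 ≤ y2)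
    (m1 : (1 - q1) * x1 = q1 * a * y1) (m2 : (1 - q2) * x2 = q2 * a * y2) : False := by
  have hq11 : q1 < 1 := lt_trans h12 hq21
  have hx1 : 0 < x1 := lt_of_lt_of_le hx2 hx
  have key1 : x2 * y1 ≤ x1 * y2 :=
    le_trans (mul_le_mul_of_nonneg_right hx hy1.le) (mul_le_mul_of_nonneg_left hy hx1.le)
  have c1 : (0:ℝ) < (1 - q1) * (1 - q2) := mul_pos (by linarith) (by linarith)
  have key2 := mul_le_mul_of_nonneg_left key1 c1.le
  have e1 : (1 - q1) * (1 - q2) * (x1 * y2) = (q1 * (1 - q2)) * (a * y1 * y2) := by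
    linear_combination ((1 - q2) * y2) * m1
  have e2 : (1 - q1) * (1 - q2) * (x2 * y1) = (q2 * (1 - q1)) * (a * y1 * y2) := by
    linear_combination ((1 - q1) * y1) * m2
  rw [e1, e2] at key2
  have hP : 0 < a * y1 * y2 := mul_pos (mul_pos ha hy1) hy2
  have := le_of_mul_le_mul_right key2 hP
  nlinarith

lemma chain_ineq (p x μ Gx Nmx gx : ℝ) (hp0 : 0 < p) (hp1 : p < 1) (hgx : 0 < gx)
    (hGx : 0 < Gx) (hGle : Gx ≤ 1) (kW : 0 ≤ x * Gx - Nmx)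
    (kKL : gx * (x * Gx - Nmx) ≤ Gx ^ 2)
    (kμ : x * (1 - Gx) ≤ μ - Nmx) :
    p * gx * (x * (1 - p + p * Gx) - ((1 - p) * μ + p * Nmx)) ≤ (1 - p + p * Gx) ^ 2 := by
  have k4 : Nmx ≤ μ * Gx := by
    nlinarith [mul_nonneg (sub_nonneg.mpr hGle) kW, mul_le_mul_of_nonneg_right kμ hGx.le]
  have k5 : gx * (x - μ) * Gx ≤ Gx ^ 2 := by
    nlinarith [mul_le_mul_of_nonneg_left k4 hgx.le]
  have b1 : p * (1 - p) * (gx * (x - μ) * Gx) ≤ p * (1 - p) * Gx ^ 2 :=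
    mul_le_mul_of_nonneg_left k5 (mul_nonneg hp0.le (by linarith))
  have b2 : (p * p * Gx) * (gx * (x * Gx - Nmx)) ≤ (p * p * Gx) * Gx ^ 2 :=
    mul_le_mul_of_nonneg_left kKL (by positivity)
  have e1 : 0 ≤ (1 - p) ^ 2 * Gx := mul_nonneg (sq_nonneg _) hGx.le
  have e2 : 0 ≤ p * (1 - p) * Gx ^ 2 := mul_nonneg (mul_nonneg hp0.le (by linarith)) (sq_nonneg _)
  have c1 : Gx * (p * gx * (x * (1 - p + p * Gx) - ((1 - p) * μ + p * Nmx)))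
      ≤ Gx * (1 - p + p * Gx) ^ 2 := by nlinarith [b1, b2, e1, e2]
  exact le_of_mul_le_mul_left c1 hGx

section Main2
variable (p : ℝ) (G : ℝ → ℝ) (μ : ℝ)

lemma psi_anti (hvm : vmin < vmax) (hp0 : 0 < p) (hp1 : p < 1)
    (hg_cont : ContinuousOn g (Set.Icc vmin vmax))
    (hg_pos : ∀ x ∈ Set.Icc vmin vmax, 0 < g x)
    (hg_density : ∫ t in vmin..vmax, g t = 1)
    (hlc : ∀ x ∈ Set.Icc vmin vmax, ∀ y ∈ Set.Icc vmin vmax,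
      ∀ a b : ℝ, 0 ≤ a → 0 ≤ b → a + b = 1 →
        g x ^ a * g y ^ b ≤ g (a * x + b * y))
    (hG : ∀ v, G v = ∫ t in vmin..v, g t)
    (hμ : μ = ∫ t in vmin..vmax, t * g t)
    (vB s : ℝ) (hvB0 : vmin < vB) (hs1 : s ≤ vmax)
    (hφpos : ∀ x ∈ Set.Ioo vB s,
      0 < x * (1 - p + p * G x) - ((1 - p) * μ + p * ∫ t in vmin..x, t * g t)) :
    StrictAntiOn (fun v => (s - v) * (1 - p + p * G v) /
      (v * (1 - p + p * G v) - ((1 - p) * μ + p * ∫ t in vmin..v, t * g t)))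
      (Set.Ioo vB s) := by
  have htg_cont : ContinuousOn (fun t => t * g t) (Set.Icc vmin vmax) :=
    continuousOn_id.mul hg_cont
  -- derivative of the quotient at each point of the open interval
  have hd : ∀ x ∈ Set.Ioo vB s,
      HasDerivAt (fun v => (s - v) * (1 - p + p * G v) /
        (v * (1 - p + p * G v) - ((1 - p) * μ + p * ∫ t in vmin..v, t * g t)))
      (((-1 * (1 - p + p * G x) + (s - x) * (p * g x)) *
          (x * (1 - p + p * G x) - ((1 - p) * μ + p * ∫ t in vmin..x, t * g t))
        - (s - x) * (1 - p + p * G x) *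
          (1 * (1 - p + p * G x) + x * (p * g x) - p * (x * g x))) /
        (x * (1 - p + p * G x) - ((1 - p) * μ + p * ∫ t in vmin..x, t * g t)) ^ 2) x := by
    intro x hx
    have hxio : x ∈ Set.Ioo vmin vmax := ⟨lt_trans hvB0 hx.1, lt_of_lt_of_le hx.2 hs1⟩
    have hGd : HasDerivAt G (g x) x := by
      have h := ftc_prim hg_cont hxio
      rwa [show (fun u => ∫ t in vmin..u, g t) = G from (funext hG).symm] at h
    have hDd : HasDerivAt (fun v => 1 - p + p * G v) (p * g x) x :=
      (hGd.const_mul p).const_add (1 - p)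
    have hNd : HasDerivAt (fun v => ∫ t in vmin..v, t * g t) (x * g x) x :=
      ftc_prim htg_cont hxio
    have hnum : HasDerivAt (fun v => (s - v) * (1 - p + p * G v))
        (-1 * (1 - p + p * G x) + (s - x) * (p * g x)) x :=
      (((hasDerivAt_id x).const_sub s).mul hDd)
    have hden : HasDerivAt
        (fun v => v * (1 - p + p * G v) - ((1 - p) * μ + p * ∫ t in vmin..v, t * g t))
        (1 * (1 - p + p * G x) + x * (p * g x) - p * (x * g x)) x :=
      ((hasDerivAt_id x).mul hDd).sub ((hNd.const_mul p).const_add ((1 - p) * μ))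
    exact hnum.div hden (ne_of_gt (hφpos x hx))
  apply strictAntiOn_of_deriv_neg (convex_Ioo vB s)
  · intro x hx
    exact ((hd x hx).continuousAt).continuousWithinAt
  · rw [interior_Ioo]
    intro x hx
    rw [(hd x hx).deriv]
    have hxio : x ∈ Set.Ioo vmin vmax := ⟨lt_trans hvB0 hx.1, lt_of_lt_of_le hx.2 hs1⟩
    have hxI : x ∈ Set.Icc vmin vmax := ⟨hxio.1.le, hxio.2.le⟩
    have hgx : 0 < g x := hg_pos x hxI
    have hGx_pos : 0 < G x := by
      rw [hG]
      apply intervalIntegral.intervalIntegral_pos_of_pos_on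
        (intg_sub hg_cont le_rfl hxio.1.le hxio.2.le)
        (fun u hu => hg_pos u ⟨hu.1.le, le_trans hu.2.le hxio.2.le⟩) hxio.1
    have hGadd : (∫ t in vmin..x, g t) + ∫ t in x..vmax, g t = ∫ t in vmin..vmax, g t :=
      intervalIntegral.integral_add_adjacent_intervals
        (intg_sub hg_cont le_rfl hxio.1.le hxio.2.le)
        (intg_sub hg_cont hxio.1.le hxio.2.le le_rfl)
    have hGtail_nn : 0 ≤ ∫ t in x..vmax, g t := by
      apply intervalIntegral.integral_nonneg hxio.2.le
      intro u hu; exact (hg_pos u ⟨le_trans hxio.1.le hu.1, hu.2⟩).le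
    have hGx_le1 : G x ≤ 1 := by
      rw [hG]; rw [hg_density] at hGadd; linarith
    have i_tg_sub : ∀ x' y, vmin ≤ x' → x' ≤ y → y ≤ vmax →
        IntervalIntegrable (fun t => t * g t) MeasureTheory.volume x' y := by
      intro x' y h1 h2 h3
      apply ContinuousOn.intervalIntegrable
      apply htg_cont.mono
      rw [Set.uIcc_of_le h2]; exact Set.Icc_subset_Icc h1 h3
    have kW : 0 ≤ x * G x - (∫ t in vmin..x, t * g t) := by
      have : (∫ t in vmin..x, t * g t) ≤ ∫ t in vmin..x, x * g t := by
        apply intervalIntegral.integral_mono_on hxio.1.le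
          (i_tg_sub vmin x le_rfl hxio.1.le hxio.2.le)
          ((intg_sub hg_cont le_rfl hxio.1.le hxio.2.le).const_mul x)
        intro u hu
        have := (hg_pos u ⟨hu.1, le_trans hu.2 hxio.2.le⟩).le
        nlinarith [hu.2]
      rw [intervalIntegral.integral_const_mul] at this
      rw [hG]; linarith
    have kKL : g x * (x * G x - (∫ t in vmin..x, t * g t)) ≤ (G x) ^ 2 := by
      rw [hG]; exact key_lc hg_cont hg_pos hlc hxio.1.le hxio.2.le
    have kμ : x * (1 - G x) ≤ μ - ∫ t in vmin..x, t * g t := by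
      have hadd : (∫ t in vmin..x, t * g t) + ∫ t in x..vmax, t * g t
          = ∫ t in vmin..vmax, t * g t :=
        intervalIntegral.integral_add_adjacent_intervals
          (i_tg_sub vmin x le_rfl hxio.1.le hxio.2.le)
          (i_tg_sub x vmax hxio.1.le hxio.2.le le_rfl)
      have hmono : (∫ t in x..vmax, x * g t) ≤ ∫ t in x..vmax, t * g t := by
        apply intervalIntegral.integral_mono_on hxio.2.le
          ((intg_sub hg_cont hxio.1.le hxio.2.le le_rfl).const_mul x)
          (i_tg_sub x vmax hxio.1.le hxio.2.le le_rfl)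
        intro u hu
        have := (hg_pos u ⟨le_trans hxio.1.le hu.1, hu.2⟩).le
        nlinarith [hu.1]
      rw [intervalIntegral.integral_const_mul] at hmono
      rw [hg_density] at hGadd
      rw [hμ, hG]
      have e : x * (1 - ∫ t in vmin..x, g t) = x * ∫ t in x..vmax, g t := by
        linear_combination (-x) * hGadd
      linarith [hmono, hadd, e]
    have chain := chain_ineq p x μ (G x) (∫ t in vmin..x, t * g t) (g x)
      hp0 hp1 hgx hGx_pos hGx_le1 kW kKL kμ
    have hφx := hφpos x hx
    have hDx : 0 < 1 - p + p * G x := by nlinarith [hGx_pos]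
    apply div_neg_of_neg_of_pos
    · have w_nonneg : (0:ℝ) ≤ s - x := by linarith [hx.2]
      have h2 := mul_le_mul_of_nonneg_left chain w_nonneg
      have h1 := mul_pos hDx hφx
      ring_nf
      ring_nf at h1 h2
      linarith [h1, h2]
    · positivity

lemma theta_mono (hp0 : 0 < p) (hp1 : p < 1)
    (hg_cont : ContinuousOn g (Set.Icc vmin vmax))
    (hg_pos : ∀ x ∈ Set.Icc vmin vmax, 0 < g x)
    (hG : ∀ v, G v = ∫ t in vmin..v, g t)
    (vB s : ℝ) (hs0 : vmin ≤ s) (hvB1 : vB < vmax)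
    (hφneg : ∀ x ∈ Set.Ioo s vB,
      x * (1 - p + p * G x) - ((1 - p) * μ + p * ∫ t in vmin..x, t * g t) < 0)
    (hGnn : ∀ x ∈ Set.Ioo s vB, 0 ≤ G x) :
    StrictMonoOn (fun v => (v - s) * (1 - p + p * G v) /
      -(v * (1 - p + p * G v) - ((1 - p) * μ + p * ∫ t in vmin..v, t * g t)))
      (Set.Ioo s vB) := by
  have htg_cont : ContinuousOn (fun t => t * g t) (Set.Icc vmin vmax) :=
    continuousOn_id.mul hg_cont
  have hd : ∀ x ∈ Set.Ioo s vB,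
      HasDerivAt (fun v => (v - s) * (1 - p + p * G v) /
        -(v * (1 - p + p * G v) - ((1 - p) * μ + p * ∫ t in vmin..v, t * g t)))
      (((1 * (1 - p + p * G x) + (x - s) * (p * g x)) *
          -(x * (1 - p + p * G x) - ((1 - p) * μ + p * ∫ t in vmin..x, t * g t))
        - (x - s) * (1 - p + p * G x) *
          -(1 * (1 - p + p * G x) + x * (p * g x) - p * (x * g x))) /
        (-(x * (1 - p + p * G x) - ((1 - p) * μ + p * ∫ t in vmin..x, t * g t))) ^ 2) x := by
    intro x hx
    have hxio : x ∈ Set.Ioo vmin vmax := ⟨lt_of_le_of_lt hs0 hx.1, lt_trans hx.2 hvB1⟩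
    have hGd : HasDerivAt G (g x) x := by
      have h := ftc_prim hg_cont hxio
      rwa [show (fun u => ∫ t in vmin..u, g t) = G from (funext hG).symm] at h
    have hDd : HasDerivAt (fun v => 1 - p + p * G v) (p * g x) x :=
      (hGd.const_mul p).const_add (1 - p)
    have hNd : HasDerivAt (fun v => ∫ t in vmin..v, t * g t) (x * g x) x :=
      ftc_prim htg_cont hxio
    have hnum : HasDerivAt (fun v => (v - s) * (1 - p + p * G v))
        (1 * (1 - p + p * G x) + (x - s) * (p * g x)) x :=
      (((hasDerivAt_id x).sub_const s).mul hDd)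
    have hden : HasDerivAt
        (fun v => -(v * (1 - p + p * G v) - ((1 - p) * μ + p * ∫ t in vmin..v, t * g t)))
        (-(1 * (1 - p + p * G x) + x * (p * g x) - p * (x * g x))) x :=
      (((hasDerivAt_id x).mul hDd).sub ((hNd.const_mul p).const_add ((1 - p) * μ))).neg
    exact hnum.div hden (by have := hφneg x hx; intro hc; rw [neg_eq_zero] at hc; linarith)
  apply strictMonoOn_of_deriv_pos (convex_Ioo s vB)
  · intro x hx
    exact ((hd x hx).continuousAt).continuousWithinAt
  · rw [interior_Ioo]
    intro x hx
    rw [(hd x hx).deriv]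
    have hxio : x ∈ Set.Ioo vmin vmax := ⟨lt_of_le_of_lt hs0 hx.1, lt_trans hx.2 hvB1⟩
    have hgx : 0 < g x := hg_pos x ⟨hxio.1.le, hxio.2.le⟩
    have hφx := hφneg x hx
    have hDx : 0 < 1 - p + p * G x := by nlinarith [hGnn x hx]
    apply div_pos
    · have h1 : 0 < (1 - p + p * G x) *
          -(x * (1 - p + p * G x) - ((1 - p) * μ + p * ∫ t in vmin..x, t * g t)) :=
        mul_pos hDx (by linarith)
      have h2 : 0 ≤ ((x - s) * (p * g x)) *
          -(x * (1 - p + p * G x) - ((1 - p) * μ + p * ∫ t in vmin..x, t * g t)) := by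
        apply mul_nonneg
        · apply mul_nonneg (by linarith [hx.1]) (by positivity)
        · linarith
      have h3 : 0 ≤ (x - s) * (1 - p + p * G x) * (1 - p + p * G x) := by
        apply mul_nonneg (mul_nonneg (by linarith [hx.1]) hDx.le) hDx.le
      nlinarith [h1, h2, h3]
    · have : -(x * (1 - p + p * G x) - ((1 - p) * μ + p * ∫ t in vmin..x, t * g t)) > 0 := by
        linarith
      positivity
end Main2


end Aux


set_option maxHeartbeats 2000000 in
/-- the late-disclosure threshold v^L(s), viewed as a function of q,
is increasing in q when s > v^B and decreasing when s < v^B. Writing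
v^L = λ(q)·s + (1-λ(q))·E[v|N,∅] with λ(q) = Pr(V|s,∅) strictly increasing in q:
if s > E[v|N,∅] then v^L increases in q, if s < E[v|N,∅] it decreases, and
s ≷ v^B implies s ≷ E[v|N,∅]. -/
theorem late_threshold_comparative_statics_in_q
    (vmin vmax : ℝ) (hv : vmin < vmax)
    (p : ℝ) (hp : p ∈ Set.Ioo (0:ℝ) 1)
    (g : ℝ → ℝ)
    (hg_cont : ContinuousOn g (Set.Icc vmin vmax))
    (hg_pos : ∀ x ∈ Set.Icc vmin vmax, 0 < g x)
    (hg_density : ∫ t in vmin..vmax, g t = 1)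
    (hg_logconcave : ∀ x ∈ Set.Icc vmin vmax, ∀ y ∈ Set.Icc vmin vmax,
      ∀ a b : ℝ, 0 ≤ a → 0 ≤ b → a + b = 1 →
        g x ^ a * g y ^ b ≤ g (a * x + b * y))
    (G : ℝ → ℝ) (hG : ∀ v, G v = ∫ t in vmin..v, g t)
    (μ : ℝ) (hμ : μ = ∫ t in vmin..vmax, t * g t)
    (vB : ℝ) (hvB_mem : vB ∈ Set.Ioo vmin vmax)
    (hvB : vB * ((1 - p) + p * G vB) = (1 - p) * μ + p * ∫ t in vmin..vB, t * g t)
    (s : ℝ) (hs : s ∈ Set.Icc vmin vmax)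
    (vL lam E : ℝ → ℝ)   -- threshold, veracity weight, and E[v|N,∅], as functions of q
    (hvL_mem : ∀ q ∈ Set.Ioo (0:ℝ) 1, vL q ∈ Set.Icc vmin vmax)
    (hlam : ∀ q ∈ Set.Ioo (0:ℝ) 1, lam q =
      q * (if s < vB then 1 else 1 - p) /
        (q * (if s < vB then 1 else 1 - p) + (1 - q) * (1 - p + p * G (vL q))))
    (hE : ∀ q ∈ Set.Ioo (0:ℝ) 1, E q =
      ((1 - p) * μ + p * ∫ t in vmin..(vL q), t * g t) / (1 - p + p * G (vL q)))
    (hvL : ∀ q ∈ Set.Ioo (0:ℝ) 1, vL q = lam q * s + (1 - lam q) * E q) :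
    StrictMonoOn lam (Set.Ioo (0:ℝ) 1) ∧
    (vB < s → StrictMonoOn vL (Set.Ioo (0:ℝ) 1)) ∧
    (s < vB → StrictAntiOn vL (Set.Ioo (0:ℝ) 1)) ∧
    (vB < s → ∀ q ∈ Set.Ioo (0:ℝ) 1, E q < s) ∧
    (s < vB → ∀ q ∈ Set.Ioo (0:ℝ) 1, s < E q) := by
  obtain ⟨hp0, hp1⟩ := hp
  obtain ⟨hs0, hs1⟩ := hs
  obtain ⟨hvB0, hvB1⟩ := hvB_mem
  have hvm : vmin ≤ vmax := hv.le
  -- notation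
  set Nm : ℝ → ℝ := fun v => ∫ t in vmin..v, t * g t with hNm
  set φ : ℝ → ℝ := fun v => v * (1 - p + p * G v) - ((1 - p) * μ + p * Nm v) with hφ
  set a : ℝ := if s < vB then 1 else 1 - p with ha_def
  have ha : 0 < a := by rw [ha_def]; split <;> [norm_num; linarith]
  -- basic G facts
  have hGdiff : ∀ x y, vmin ≤ x → x ≤ y → y ≤ vmax → G y = G x + ∫ t in x..y, g t := by
    intro x y hx hxy hy
    rw [hG, hG]
    rw [← intervalIntegral.integral_add_adjacent_intervals
      (intg_sub hg_cont le_rfl hx (le_trans hxy hy)) (intg_sub hg_cont hx hxy hy)]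
  have hGnn : ∀ v, vmin ≤ v → v ≤ vmax → 0 ≤ G v := by
    intro v h1 h2
    rw [hG]
    apply intervalIntegral.integral_nonneg h1
    intro u hu; exact (hg_pos u ⟨hu.1, le_trans hu.2 h2⟩).le
  have hGle1 : ∀ v, vmin ≤ v → v ≤ vmax → G v ≤ 1 := by
    intro v h1 h2
    have := hGdiff v vmax h1 h2 le_rfl
    rw [hG vmax] at this
    rw [hg_density] at this
    have hnn : 0 ≤ ∫ t in v..vmax, g t := by
      apply intervalIntegral.integral_nonneg h2
      intro u hu; exact (hg_pos u ⟨le_trans h1 hu.1, hu.2⟩).le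
    linarith
  have hD_pos : ∀ v, vmin ≤ v → v ≤ vmax → 0 < 1 - p + p * G v := by
    intro v h1 h2
    have := hGnn v h1 h2
    nlinarith
  -- φ is strictly increasing on [vmin, vmax]
  have hφmono : ∀ x y, vmin ≤ x → x < y → y ≤ vmax → φ x < φ y := by
    intro x y hx hxy hy
    have hGd := hGdiff x y hx hxy.le hy
    have i1 : IntervalIntegrable (fun t => t * g t) MeasureTheory.volume vmin x := by
      apply ContinuousOn.intervalIntegrable
      apply (continuousOn_id.mul hg_cont).mono
      rw [Set.uIcc_of_le hx]
      exact Set.Icc_subset_Icc le_rfl (le_trans hxy.le hy)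
    have i2 : IntervalIntegrable (fun t => t * g t) MeasureTheory.volume x y := by
      apply ContinuousOn.intervalIntegrable
      apply (continuousOn_id.mul hg_cont).mono
      rw [Set.uIcc_of_le hxy.le]
      exact Set.Icc_subset_Icc hx hy
    have hNd : Nm y = Nm x + ∫ t in x..y, t * g t :=
      (intervalIntegral.integral_add_adjacent_intervals i1 i2).symm
    have hIg : 0 ≤ ∫ t in x..y, g t := by
      apply intervalIntegral.integral_nonneg hxy.le
      intro u hu; exact (hg_pos u ⟨le_trans hx hu.1, le_trans hu.2 hy⟩).le
    have hItg : (∫ t in x..y, t * g t) ≤ y * ∫ t in x..y, g t := by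
      rw [← intervalIntegral.integral_const_mul]
      apply intervalIntegral.integral_mono_on hxy.le
      · apply ContinuousOn.intervalIntegrable
        apply (continuousOn_id.mul hg_cont).mono
        rw [Set.uIcc_of_le hxy.le]; exact Set.Icc_subset_Icc hx hy
      · apply IntervalIntegrable.const_mul
        exact intg_sub hg_cont hx hxy.le hy
      · intro u hu
        have := (hg_pos u ⟨le_trans hx hu.1, le_trans hu.2 hy⟩).le
        nlinarith [hu.2]
    have hGxnn := hGnn x hx (le_trans hxy.le hy)
    rw [hφ]
    simp only
    rw [hGd, hNd]
    nlinarith [mul_pos (sub_pos.mpr hxy) (show (0:ℝ) < 1 - p by linarith),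
      mul_nonneg (mul_nonneg hp0.le (sub_pos.mpr hxy).le) hGxnn,
      mul_nonneg hp0.le (sub_nonneg.mpr hItg)]
  have hφmono_le : ∀ x y, vmin ≤ x → x ≤ y → y ≤ vmax → φ x ≤ φ y := by
    intro x y hx hxy hy
    rcases eq_or_lt_of_le hxy with rfl | h
    · exact le_rfl
    · exact (hφmono x y hx h hy).le
  have hφvB : φ vB = 0 := by
    rw [hφ]; simp only [hNm]; linarith [hvB]
  -- the master equation
  have master : ∀ q ∈ Set.Ioo (0:ℝ) 1,
      (1 - q) * φ (vL q) = q * a * (s - vL q) := by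
    intro q hq
    obtain ⟨hq0, hq1⟩ := hq
    have hmem := hvL_mem q ⟨hq0, hq1⟩
    have hDq := hD_pos (vL q) hmem.1 hmem.2
    have := master_eq p q s (vL q) μ (1 - p + p * G (vL q))
      ((1 - p) * μ + p * Nm (vL q)) a hDq hq0 hq1 ha (lam q) (E q)
      (by rw [hlam q ⟨hq0, hq1⟩, ha_def]) (by rw [hE q ⟨hq0, hq1⟩, hNm]) (hvL q ⟨hq0, hq1⟩)
    rw [hφ]
    simp only
    linarith [this]
  -- location of vL q
  have memA : vB < s → ∀ q ∈ Set.Ioo (0:ℝ) 1, vB < vL q ∧ vL q < s := by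
    intro hBs q hq
    obtain ⟨hq0, hq1⟩ := hq
    have hmem := hvL_mem q ⟨hq0, hq1⟩
    have hm := master q ⟨hq0, hq1⟩
    constructor
    · by_contra h
      push_neg at h
      have h1 : φ (vL q) ≤ 0 := by
        rw [← hφvB]; exact hφmono_le (vL q) vB hmem.1 h hvB1.le
      have h2 : 0 < q * a * (s - vL q) := by
        apply mul_pos (mul_pos hq0 ha); linarith
      nlinarith
    · by_contra h
      push_neg at h
      have h1 : 0 < φ (vL q) := by
        rw [← hφvB]
        exact lt_of_lt_of_le (hφmono vB s hvB0.le hBs hs1) (hφmono_le s (vL q) hs0 h hmem.2)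
      have h2 : q * a * (s - vL q) ≤ 0 := by
        apply mul_nonpos_of_nonneg_of_nonpos (mul_pos hq0 ha).le; linarith
      nlinarith
  have memB : s < vB → ∀ q ∈ Set.Ioo (0:ℝ) 1, s < vL q ∧ vL q < vB := by
    intro hBs q hq
    obtain ⟨hq0, hq1⟩ := hq
    have hmem := hvL_mem q ⟨hq0, hq1⟩
    have hm := master q ⟨hq0, hq1⟩
    constructor
    · by_contra h
      push_neg at h
      have h1 : φ (vL q) < 0 := by
        rw [← hφvB]
        exact lt_of_le_of_lt (hφmono_le (vL q) s hmem.1 h hs1) (hφmono s vB hs0 hBs hvB1.le)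
      have h2 : 0 ≤ q * a * (s - vL q) := by
        apply mul_nonneg (mul_pos hq0 ha).le; linarith
      nlinarith
    · by_contra h
      push_neg at h
      have h1 : 0 ≤ φ (vL q) := by
        rw [← hφvB]; exact hφmono_le vB (vL q) hvB0.le h hmem.2
      have h2 : q * a * (s - vL q) < 0 := by
        apply mul_neg_of_pos_of_neg (mul_pos hq0 ha); linarith
      nlinarith
  have memC : s = vB → ∀ q ∈ Set.Ioo (0:ℝ) 1, vL q = vB := by
    intro hBs q hq
    obtain ⟨hq0, hq1⟩ := hq
    have hmem := hvL_mem q ⟨hq0, hq1⟩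
    have hm := master q ⟨hq0, hq1⟩
    by_contra h
    rcases lt_or_gt_of_ne h with h | h
    · have h1 : φ (vL q) < 0 := by
        rw [← hφvB]; exact hφmono (vL q) vB hmem.1 h hvB1.le
      have h2 : 0 < q * a * (s - vL q) := by
        apply mul_pos (mul_pos hq0 ha); rw [hBs]; linarith
      nlinarith
    · have h1 : 0 < φ (vL q) := by
        rw [← hφvB]; exact hφmono vB (vL q) hvB0.le h hmem.2
      have h2 : q * a * (s - vL q) < 0 := by
        apply mul_neg_of_pos_of_neg (mul_pos hq0 ha); rw [hBs]; linarith
      nlinarith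
  -- strict monotonicity of vL when vB < s
  have monoVL : vB < s → StrictMonoOn vL (Set.Ioo (0:ℝ) 1) := by
    intro hBs q1 hq1 q2 hq2 h12
    by_contra hcon
    push_neg at hcon
    obtain ⟨hA1, hB1⟩ := memA hBs q1 hq1
    obtain ⟨hA2, hB2⟩ := memA hBs q2 hq2
    have hmem1 := hvL_mem q1 hq1
    have hmem2 := hvL_mem q2 hq2
    have hφ2 : 0 < φ (vL q2) := by
      rw [← hφvB]; exact hφmono vB (vL q2) hvB0.le hA2 hmem2.2
    have hφ21 : φ (vL q2) ≤ φ (vL q1) := hφmono_le _ _ hmem2.1 hcon hmem1.2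
    exact cross_contra q1 q2 a (φ (vL q1)) (φ (vL q2)) (s - vL q1) (s - vL q2)
      hq1.1 hq2.2 h12 ha hφ2 (by linarith) (by linarith) hφ21 (by linarith)
      (master q1 hq1) (master q2 hq2)
  have antiVL : s < vB → StrictAntiOn vL (Set.Ioo (0:ℝ) 1) := by
    intro hBs q1 hq1 q2 hq2 h12
    by_contra hcon
    push_neg at hcon
    obtain ⟨hA1, hB1⟩ := memB hBs q1 hq1
    obtain ⟨hA2, hB2⟩ := memB hBs q2 hq2
    have hmem1 := hvL_mem q1 hq1
    have hmem2 := hvL_mem q2 hq2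
    have hφ2 : φ (vL q2) < 0 := by
      rw [← hφvB]; exact hφmono (vL q2) vB hmem2.1 hB2 hvB1.le
    have hφ12 : φ (vL q1) ≤ φ (vL q2) := hφmono_le _ _ hmem1.1 hcon hmem2.2
    exact cross_contra q1 q2 a (-(φ (vL q1))) (-(φ (vL q2))) (vL q1 - s) (vL q2 - s)
      hq1.1 hq2.2 h12 ha (by linarith) (by linarith) (by linarith) (by linarith)
      (by linarith) (by linarith [master q1 hq1]) (by linarith [master q2 hq2])
  -- conjunct 4
  have conj4 : vB < s → ∀ q ∈ Set.Ioo (0:ℝ) 1, E q < s := by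
    intro hBs q hq
    obtain ⟨hA, hB⟩ := memA hBs q hq
    have hmem := hvL_mem q hq
    have hDq := hD_pos (vL q) hmem.1 hmem.2
    have hφq : 0 < φ (vL q) := by
      rw [← hφvB]; exact hφmono vB (vL q) hvB0.le hA hmem.2
    rw [hE q hq]
    rw [div_lt_iff₀ hDq]
    have hexp : φ (vL q) = vL q * (1 - p + p * G (vL q)) - ((1 - p) * μ + p * Nm (vL q)) := by
      rw [hφ]
    have : (1 - p) * μ + p * Nm (vL q) < vL q * (1 - p + p * G (vL q)) := by linarith
    rw [hNm] at this
    calc (1 - p) * μ + p * ∫ t in vmin..vL q, t * g t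
        < vL q * (1 - p + p * G (vL q)) := this
    _ ≤ s * (1 - p + p * G (vL q)) := by nlinarith
  have conj5 : s < vB → ∀ q ∈ Set.Ioo (0:ℝ) 1, s < E q := by
    intro hBs q hq
    obtain ⟨hA, hB⟩ := memB hBs q hq
    have hmem := hvL_mem q hq
    have hDq := hD_pos (vL q) hmem.1 hmem.2
    have hφq : φ (vL q) < 0 := by
      rw [← hφvB]; exact hφmono (vL q) vB hmem.1 hB hvB1.le
    rw [hE q hq]
    rw [lt_div_iff₀ hDq]
    have hexp : φ (vL q) = vL q * (1 - p + p * G (vL q)) - ((1 - p) * μ + p * Nm (vL q)) := by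
      rw [hφ]
    have : vL q * (1 - p + p * G (vL q)) < (1 - p) * μ + p * Nm (vL q) := by linarith
    rw [hNm] at this
    calc s * (1 - p + p * G (vL q)) ≤ vL q * (1 - p + p * G (vL q)) := by nlinarith
    _ < (1 - p) * μ + p * ∫ t in vmin..vL q, t * g t := this
  -- the hard part: lam strictly increasing
  have hφe : ∀ v, φ v = v * (1 - p + p * G v)
      - ((1 - p) * μ + p * ∫ t in vmin..v, t * g t) := by
    intro v; simp only [hφ, hNm]
  have lamMono : StrictMonoOn lam (Set.Ioo (0:ℝ) 1) := by
    intro q1 hq1 q2 hq2 h12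
    have hmem1 := hvL_mem q1 hq1
    have hmem2 := hvL_mem q2 hq2
    have hD1 : 0 < 1 - p + p * G (vL q1) := hD_pos _ hmem1.1 hmem1.2
    have hD2 : 0 < 1 - p + p * G (vL q2) := hD_pos _ hmem2.1 hmem2.2
    have m1 := master q1 hq1
    have m2 := master q2 hq2
    obtain ⟨hq10, hq11⟩ := hq1
    obtain ⟨hq20, hq21⟩ := hq2
    have hT1 : 0 < q1 * a + (1 - q1) * (1 - p + p * G (vL q1)) := by
      nlinarith [mul_pos hq10 ha]
    have hT2 : 0 < q2 * a + (1 - q2) * (1 - p + p * G (vL q2)) := by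
      nlinarith [mul_pos hq20 ha]
    have KEY : q1 * (1 - q2) * (1 - p + p * G (vL q2))
        < q2 * (1 - q1) * (1 - p + p * G (vL q1)) := by
      have hQ : 0 < q1 * q2 * a := mul_pos (mul_pos hq10 hq20) ha
      rcases lt_trichotomy s vB with hsb | hsb | hsb
      · -- s < vB : use Θ strictly increasing
        have hv21 : vL q2 < vL q1 := antiVL hsb ⟨hq10, hq11⟩ ⟨hq20, hq21⟩ h12
        obtain ⟨hA1, hB1⟩ := memB hsb q1 ⟨hq10, hq11⟩
        obtain ⟨hA2, hB2⟩ := memB hsb q2 ⟨hq20, hq21⟩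
        have hφ1 : φ (vL q1) < 0 := by
          rw [← hφvB]; exact hφmono (vL q1) vB hmem1.1 hB1 hvB1.le
        have hφ2 : φ (vL q2) < 0 := by
          rw [← hφvB]; exact hφmono (vL q2) vB hmem2.1 hB2 hvB1.le
        have hφneg' : ∀ x ∈ Set.Ioo s vB,
            x * (1 - p + p * G x) - ((1 - p) * μ + p * ∫ t in vmin..x, t * g t) < 0 := by
          intro x hx
          have h1 : φ x < φ vB :=
            hφmono x vB (le_trans hs0 hx.1.le) hx.2 hvB1.le
          rw [hφvB, hφe x] at h1
          exact h1
        have hGnn' : ∀ x ∈ Set.Ioo s vB, 0 ≤ G x := by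
          intro x hx
          exact hGnn x (le_trans hs0 hx.1.le) (le_trans hx.2.le hvB1.le)
        have TH := theta_mono p G μ hp0 hp1 hg_cont hg_pos hG vB s hs0 hvB1 hφneg' hGnn'
        have hth := TH ⟨hA2, hB2⟩ ⟨hA1, hB1⟩ hv21
        simp only at hth
        rw [← hφe (vL q1), ← hφe (vL q2)] at hth
        rw [div_lt_div_iff₀ (by linarith) (by linarith)] at hth
        -- hth : (vL q2 - s) * D2 * -(φ (vL q1)) < (vL q1 - s) * D1 * -(φ (vL q2))
        have step : q1 * (1 - q2) * (1 - p + p * G (vL q2)) * (-(φ (vL q1)) * -(φ (vL q2)))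
            < q2 * (1 - q1) * (1 - p + p * G (vL q1)) * (-(φ (vL q1)) * -(φ (vL q2))) := by
          calc q1 * (1 - q2) * (1 - p + p * G (vL q2)) * (-(φ (vL q1)) * -(φ (vL q2)))
              = (q1 * q2 * a) * ((vL q2 - s) * (1 - p + p * G (vL q2)) * -(φ (vL q1))) := by
                linear_combination (q1 * (1 - p + p * G (vL q2)) * φ (vL q1)) * m2
          _ < (q1 * q2 * a) * ((vL q1 - s) * (1 - p + p * G (vL q1)) * -(φ (vL q2))) :=
                mul_lt_mul_of_pos_left hth hQ
          _ = q2 * (1 - q1) * (1 - p + p * G (vL q1)) * (-(φ (vL q1)) * -(φ (vL q2))) := by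
                linear_combination (q2 * (1 - p + p * G (vL q1)) * -(φ (vL q2))) * m1
        exact lt_of_mul_lt_mul_right step (mul_pos (by linarith) (by linarith)).le
      · -- s = vB : vL q = vB for all q
        rw [memC hsb q1 ⟨hq10, hq11⟩, memC hsb q2 ⟨hq20, hq21⟩]
        have hDB : 0 < 1 - p + p * G vB := hD_pos vB hvB0.le hvB1.le
        have hqq : q1 * (1 - q2) < q2 * (1 - q1) := by nlinarith
        nlinarith [mul_lt_mul_of_pos_right hqq hDB]
      · -- vB < s : use Ψ strictly decreasing
        have hv12 : vL q1 < vL q2 := monoVL hsb ⟨hq10, hq11⟩ ⟨hq20, hq21⟩ h12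
        obtain ⟨hA1, hB1⟩ := memA hsb q1 ⟨hq10, hq11⟩
        obtain ⟨hA2, hB2⟩ := memA hsb q2 ⟨hq20, hq21⟩
        have hφ1 : 0 < φ (vL q1) := by
          rw [← hφvB]; exact hφmono vB (vL q1) hvB0.le hA1 hmem1.2
        have hφ2 : 0 < φ (vL q2) := by
          rw [← hφvB]; exact hφmono vB (vL q2) hvB0.le hA2 hmem2.2
        have hφpos' : ∀ x ∈ Set.Ioo vB s,
            0 < x * (1 - p + p * G x) - ((1 - p) * μ + p * ∫ t in vmin..x, t * g t) := by
          intro x hx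
          have h1 : φ vB < φ x :=
            hφmono vB x hvB0.le hx.1 (le_trans hx.2.le hs1)
          rw [hφvB, hφe x] at h1
          exact h1
        have PS := psi_anti p G μ hv hp0 hp1 hg_cont hg_pos hg_density hg_logconcave hG hμ
          vB s hvB0 hs1 hφpos'
        have hth := PS ⟨hA1, hB1⟩ ⟨hA2, hB2⟩ hv12
        simp only at hth
        rw [← hφe (vL q1), ← hφe (vL q2)] at hth
        rw [div_lt_div_iff₀ hφ2 hφ1] at hth
        -- hth : (s - vL q2) * D2 * φ (vL q1) < (s - vL q1) * D1 * φ (vL q2)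
        have step : q1 * (1 - q2) * (1 - p + p * G (vL q2)) * (φ (vL q1) * φ (vL q2))
            < q2 * (1 - q1) * (1 - p + p * G (vL q1)) * (φ (vL q1) * φ (vL q2)) := by
          calc q1 * (1 - q2) * (1 - p + p * G (vL q2)) * (φ (vL q1) * φ (vL q2))
              = (q1 * q2 * a) * ((s - vL q2) * (1 - p + p * G (vL q2)) * φ (vL q1)) := by
                linear_combination (q1 * (1 - p + p * G (vL q2)) * φ (vL q1)) * m2
          _ < (q1 * q2 * a) * ((s - vL q1) * (1 - p + p * G (vL q1)) * φ (vL q2)) :=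
                mul_lt_mul_of_pos_left hth hQ
          _ = q2 * (1 - q1) * (1 - p + p * G (vL q1)) * (φ (vL q1) * φ (vL q2)) := by
                linear_combination (-(q2 * (1 - p + p * G (vL q1)) * φ (vL q2))) * m1
        exact lt_of_mul_lt_mul_right step (mul_pos hφ1 hφ2).le
    rw [hlam q1 ⟨hq10, hq11⟩, hlam q2 ⟨hq20, hq21⟩]
    rw [div_lt_div_iff₀ hT1 hT2]
    nlinarith [mul_lt_mul_of_pos_left KEY ha]
  exact ⟨lamMono, monoVL, antiVL, conj4, conj5⟩
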